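/- Fix an integer k ≥ 3, an integer ℓ ≥ 0, and ν ∈ W_{k−1}. Then σ^{ν;*}_{k,2ℓ} = Σ_{h=0}^{ℓ} (−1)^h · C(ℓ,h) · ω^ν_{k,2(ℓ−h)+1}, where C(ℓ,h) is the binomial coefficient. -/
import Mathlib


open Finset

/-- Lattice points in `ℤ^(k-1)`; coordinate `i : Fin (k-1)` represents `ν_{i+1}`. -/
abbrev Pt (k : ℕ) := Fin (k - 1) → ℤ

/-- The starting point `δ = (k-2, k-3, …, 1, 0)`. -/
def delta (k : ℕ) : Pt k := fun i => (k : ℤ) - 2 - (i : ℤ)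

/-- Membership in `Q_{k-1}`: all coordinates nonnegative. -/
def inQ {k : ℕ} (v : Pt k) : Prop := ∀ i, 0 ≤ v i

/-- Membership in `W_{k-1}`: `ν_1 > ν_2 > ⋯ > ν_{k-1} ≥ 0`. -/
def inW {k : ℕ} (v : Pt k) : Prop := StrictAnti v ∧ ∀ i, 0 ≤ v i

/-- `eVec k i` is `e_i`: `e_0 = 0` and for `1 ≤ i ≤ k-1`, `e_i` is the `i`-th
standard basis vector of `ℤ^(k-1)`. -/
def eVec (k : ℕ) (i : Fin k) : Pt k := fun j => if (j : ℕ) + 1 = (i : ℕ) then 1 else 0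

/-- The vector `e_1`. -/
def eOne (k : ℕ) : Pt k := fun j => if (j : ℕ) = 0 then 1 else 0

/-- A step in `{+e_i : 0 ≤ i ≤ k-1}`. -/
def plusStep {k : ℕ} (d : Pt k) : Prop := ∃ i : Fin k, d = eVec k i

/-- A step in `{-e_i : 0 ≤ i ≤ k-1}`. -/
def minusStep {k : ℕ} (d : Pt k) : Prop := ∃ i : Fin k, d = -eVec k i

-- AUX
section Aux
variable {k : ℕ}

lemma eVec_eq_zero {i : Fin k} (hi : (i : ℕ) = 0) : eVec k i = 0 := by
  funext j; simp [eVec]; omega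

lemma eVec_inj {i i' : Fin k} (h : eVec k i = eVec k i') : i = i' := by
  apply Fin.ext
  by_contra hne
  rcases Nat.eq_zero_or_pos (i : ℕ) with h0 | h0
  · rcases Nat.exists_eq_add_of_lt (show 0 < (i':ℕ) by omega) with ⟨s, hs⟩
    have hs' : s < k - 1 := by have := i'.isLt; omega
    have := congrFun h ⟨s, hs'⟩
    simp [eVec] at this
    omega
  · rcases Nat.exists_eq_add_of_lt h0 with ⟨s, hs⟩
    have hs' : s < k - 1 := by have := i.isLt; omega
    have := congrFun h ⟨s, hs'⟩
    simp [eVec] at this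
    omega

lemma inW_delta (hk : 2 ≤ k) : inW (delta k) := by
  constructor
  · intro a b hab
    have : (a : ℕ) < (b : ℕ) := hab
    simp only [delta]
    have : ((a : ℕ) : ℤ) < ((b : ℕ) : ℤ) := by exact_mod_cast this
    omega
  · intro i
    have := i.isLt
    simp only [delta]
    have : ((i : ℕ) : ℤ) < (k : ℤ) - 1 := by
      have h1 : (i : ℕ) < k - 1 := i.isLt
      omega
    omega

lemma inW_add_eOne {u : Pt k} (hu : inW u) : inW (u + eOne k) := by
  constructor
  · intro a b hab
    have hv : (a : ℕ) < (b : ℕ) := hab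
    have := hu.1 hab
    simp only [Pi.add_apply, eOne]
    split_ifs with h1 h2
    · omega
    · linarith
    · linarith
    · linarith
  · intro i
    have := hu.2 i
    simp only [Pi.add_apply, eOne]
    split_ifs <;> linarith
end Aux

section Count
variable {k : ℕ}

/-- Result of a (+e_i, -e_j) step pair from `u`. -/
def nxt (u : Pt k) (p : Fin k × Fin k) : Pt k := u + eVec k p.1 - eVec k p.2

/-- The step pair `p` is admissible from `u` (staying in `W`). -/
def stepOK (u : Pt k) (p : Fin k × Fin k) : Prop :=
  inW (u + eVec k p.1) ∧ inW (nxt u p)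

/-- `p` is the loop pair `(+e_1, -e_1)`. -/
def isLoop (k : ℕ) (p : Fin k × Fin k) : Prop :=
  eVec k p.1 = eOne k ∧ eVec k p.2 = eOne k

open scoped Classical in
noncomputable def PS (u : Pt k) : Finset (Fin k × Fin k) :=
  Finset.univ.filter (stepOK u)

open scoped Classical in
noncomputable def PS' (u : Pt k) : Finset (Fin k × Fin k) :=
  (PS u).filter (fun p => ¬ isLoop k p)

lemma mem_PS {u : Pt k} {p : Fin k × Fin k} : p ∈ PS u ↔ stepOK u p := by
  simp [PS]

lemma mem_PS' {u : Pt k} {p : Fin k × Fin k} :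
    p ∈ PS' u ↔ stepOK u p ∧ ¬ isLoop k p := by
  simp [PS', mem_PS]

noncomputable def sel (lf : Bool) (u : Pt k) : Finset (Fin k × Fin k) :=
  if lf then PS' u else PS u

lemma mem_sel {lf : Bool} {u : Pt k} {p : Fin k × Fin k} :
    p ∈ sel lf u ↔ stepOK u p ∧ (lf = true → ¬ isLoop k p) := by
  cases lf <;> simp [sel, mem_PS, mem_PS']

open scoped Classical in
noncomputable def cnt (ν : Pt k) (lf : Bool) : ℕ → Pt k → ℕ
  | 0, u => if u = ν then 1 else 0
  | m+1, u => ∑ p ∈ sel lf u, cnt ν lf m (nxt u p)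

lemma cnt_zero (ν : Pt k) (lf : Bool) (u : Pt k) [Decidable (u = ν)] :
    cnt ν lf 0 u = if u = ν then 1 else 0 := by
  simp [cnt]

lemma cnt_succ (ν : Pt k) (lf : Bool) (m : ℕ) (u : Pt k) :
    cnt ν lf (m+1) u = ∑ p ∈ sel lf u, cnt ν lf m (nxt u p) := rfl

/-- The loop pair, for `2 ≤ k`. -/
def loopP (k : ℕ) (hk : 2 ≤ k) : Fin k × Fin k := (⟨1, by omega⟩, ⟨1, by omega⟩)

lemma eVec_one (hk : 2 ≤ k) : eVec k ⟨1, by omega⟩ = eOne k := by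
  funext j; simp [eVec, eOne]

lemma isLoop_lp (hk : 2 ≤ k) : isLoop k (loopP k hk) := ⟨eVec_one hk, eVec_one hk⟩

lemma nxt_lp (hk : 2 ≤ k) (u : Pt k) : nxt u (loopP k hk) = u := by
  simp [nxt, loopP]

lemma isLoop_eq_lp (hk : 2 ≤ k) {p : Fin k × Fin k} (hp : isLoop k p) :
    p = loopP k hk := by
  have h1 : p.1 = ⟨1, by omega⟩ := eVec_inj (by rw [hp.1, eVec_one hk])
  have h2 : p.2 = ⟨1, by omega⟩ := eVec_inj (by rw [hp.2, eVec_one hk])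
  exact Prod.ext h1 h2

lemma lp_mem_PS (hk : 2 ≤ k) {u : Pt k} (hu : inW u) : loopP k hk ∈ PS u := by
  rw [mem_PS]
  constructor
  · show inW (u + eVec k (loopP k hk).1)
    rw [show (loopP k hk).1 = ⟨1, by omega⟩ from rfl, eVec_one hk]
    exact inW_add_eOne hu
  · rw [nxt_lp]; exact hu

lemma cnt_false_succ (hk : 2 ≤ k) (ν : Pt k) (m : ℕ) {u : Pt k} (hu : inW u) :
    cnt ν false (m+1) u = cnt ν false m u + ∑ p ∈ PS' u, cnt ν false m (nxt u p) := by
  classical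
  rw [cnt_succ]
  have hsel : sel false u = PS u := by simp [sel]
  rw [hsel, ← Finset.sum_filter_add_sum_filter_not (PS u) (isLoop k)]
  congr 1
  · have : (PS u).filter (isLoop k) = {loopP k hk} := by
      ext p
      simp only [Finset.mem_filter, Finset.mem_singleton]
      constructor
      · rintro ⟨-, h⟩; exact isLoop_eq_lp hk h
      · rintro rfl; exact ⟨lp_mem_PS hk hu, isLoop_lp hk⟩
    rw [this, Finset.sum_singleton, nxt_lp]
end Count

section Inversion
variable {k : ℕ}

lemma alg_step (A : ℕ → ℤ) (ℓ : ℕ) :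
    ∑ h ∈ Finset.range (ℓ+1), (-1)^h * (ℓ.choose h : ℤ) * (A (ℓ-h+1) - A (ℓ-h)) =
    ∑ h ∈ Finset.range (ℓ+2), (-1)^h * ((ℓ+1).choose h : ℤ) * A (ℓ+1-h) := by
  have e1 : ∑ h ∈ Finset.range (ℓ+1), (-1)^h * (ℓ.choose h : ℤ) * (A (ℓ-h+1) - A (ℓ-h)) =
      (∑ h ∈ Finset.range (ℓ+1), (-1)^h * (ℓ.choose h : ℤ) * A (ℓ+1-h)) -
      ∑ h ∈ Finset.range (ℓ+1), (-1)^h * (ℓ.choose h : ℤ) * A (ℓ-h) := by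
    rw [← Finset.sum_sub_distrib]
    refine Finset.sum_congr rfl fun h hh => ?_
    have hh' : h ≤ ℓ := by simpa using Nat.lt_succ_iff.mp (Finset.mem_range.mp hh)
    have : ℓ - h + 1 = ℓ + 1 - h := by omega
    rw [this]; ring
  have e2 : ∑ h ∈ Finset.range (ℓ+1), (-1)^h * (ℓ.choose h : ℤ) * A (ℓ+1-h) =
      (∑ h ∈ Finset.range ℓ, (-1)^(h+1) * (ℓ.choose (h+1) : ℤ) * A (ℓ-h)) + A (ℓ+1) := by
    rw [Finset.sum_range_succ' (fun h => (-1)^h * (ℓ.choose h : ℤ) * A (ℓ+1-h)) ℓ]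
    simp [Nat.succ_sub_succ]
  have e3 : ∑ h ∈ Finset.range (ℓ+2), (-1)^h * ((ℓ+1).choose h : ℤ) * A (ℓ+1-h) =
      (∑ h ∈ Finset.range (ℓ+1), (-1)^(h+1) * (((ℓ+1).choose (h+1)) : ℤ) * A (ℓ-h)) + A (ℓ+1) := by
    rw [Finset.sum_range_succ' (fun h => (-1)^h * ((ℓ+1).choose h : ℤ) * A (ℓ+1-h)) (ℓ+1)]
    simp [Nat.succ_sub_succ]
  have e4 : ∑ h ∈ Finset.range (ℓ+1), (-1)^(h+1) * (((ℓ+1).choose (h+1)) : ℤ) * A (ℓ-h) =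
      (∑ h ∈ Finset.range (ℓ+1), (-1)^(h+1) * ((ℓ.choose (h+1)) : ℤ) * A (ℓ-h)) +
      ∑ h ∈ Finset.range (ℓ+1), (-1)^(h+1) * ((ℓ.choose h) : ℤ) * A (ℓ-h) := by
    rw [← Finset.sum_add_distrib]
    refine Finset.sum_congr rfl fun h hh => ?_
    rw [Nat.choose_succ_succ' ℓ h]
    push_cast
    ring
  have e5 : ∑ h ∈ Finset.range (ℓ+1), (-1)^(h+1) * ((ℓ.choose (h+1)) : ℤ) * A (ℓ-h) =
      ∑ h ∈ Finset.range ℓ, (-1)^(h+1) * ((ℓ.choose (h+1)) : ℤ) * A (ℓ-h) := by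
    rw [Finset.sum_range_succ]
    simp [Nat.choose_succ_self]
  have e6 : ∑ h ∈ Finset.range (ℓ+1), (-1)^(h+1) * ((ℓ.choose h) : ℤ) * A (ℓ-h) =
      - ∑ h ∈ Finset.range (ℓ+1), (-1)^h * ((ℓ.choose h) : ℤ) * A (ℓ-h) := by
    rw [← Finset.sum_neg_distrib]
    refine Finset.sum_congr rfl fun h hh => by ring
  rw [e1, e2, e3, e4, e5, e6]
  ring

lemma inW_of_mem_PS' {u : Pt k} {p : Fin k × Fin k} (hp : p ∈ PS' u) :
    inW (nxt u p) := (mem_PS'.mp hp).1.2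

lemma cnt_inversion (hk : 2 ≤ k) (ν : Pt k) :
    ∀ ℓ (u : Pt k), inW u →
      (cnt ν true ℓ u : ℤ) =
        ∑ h ∈ Finset.range (ℓ+1), (-1)^h * (ℓ.choose h : ℤ) * (cnt ν false (ℓ-h) u : ℤ) := by
  intro ℓ
  induction ℓ with
  | zero =>
    intro u hu
    classical
    simp [cnt]
  | succ ℓ ih =>
    intro u hu
    have hsel : sel true u = PS' u := by simp [sel]
    calc (cnt ν true (ℓ+1) u : ℤ)
        = ∑ p ∈ PS' u, (cnt ν true ℓ (nxt u p) : ℤ) := by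
          rw [cnt_succ, hsel]; push_cast; rfl
      _ = ∑ p ∈ PS' u, ∑ h ∈ Finset.range (ℓ+1),
            (-1)^h * (ℓ.choose h : ℤ) * (cnt ν false (ℓ-h) (nxt u p) : ℤ) :=
          Finset.sum_congr rfl fun p hp => ih (nxt u p) (inW_of_mem_PS' hp)
      _ = ∑ h ∈ Finset.range (ℓ+1),
            (-1)^h * (ℓ.choose h : ℤ) * ∑ p ∈ PS' u, (cnt ν false (ℓ-h) (nxt u p) : ℤ) := by
          rw [Finset.sum_comm]
          exact Finset.sum_congr rfl fun h _ => (Finset.mul_sum _ _ _).symm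
      _ = ∑ h ∈ Finset.range (ℓ+1),
            (-1)^h * (ℓ.choose h : ℤ) *
              ((cnt ν false (ℓ-h+1) u : ℤ) - (cnt ν false (ℓ-h) u : ℤ)) := by
          refine Finset.sum_congr rfl fun h _ => ?_
          have := cnt_false_succ hk ν (ℓ-h) hu
          have hcast : (cnt ν false (ℓ-h+1) u : ℤ) =
              (cnt ν false (ℓ-h) u : ℤ) + ∑ p ∈ PS' u, (cnt ν false (ℓ-h) (nxt u p) : ℤ) := by
            rw [this]; push_cast; ring
          rw [hcast]; ring
      _ = ∑ h ∈ Finset.range (ℓ+1+1), (-1)^h * ((ℓ+1).choose h : ℤ) * (cnt ν false (ℓ+1-h) u : ℤ) := by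
          have := alg_step (fun m => (cnt ν false m u : ℤ)) ℓ
          exact this
end Inversion
/-- A `𝒫_D`-walk of length `ℓ`: starts at `δ`, stays in `D`, odd steps are `-e_i`,
even steps are `+e_i`. -/
def IsPWalk {k : ℕ} (D : Pt k → Prop) (ℓ : ℕ) (v : Fin (ℓ + 1) → Pt k) : Prop :=
  v ⟨0, Nat.succ_pos ℓ⟩ = delta k ∧ (∀ t, D (v t)) ∧
    ∀ t : ℕ, ∀ h : t + 1 < ℓ + 1,
      (Odd (t + 1) → minusStep (v ⟨t + 1, h⟩ - v ⟨t, by omega⟩)) ∧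
      (Even (t + 1) → plusStep (v ⟨t + 1, h⟩ - v ⟨t, by omega⟩))

/-- A `ℬ_D`-walk of length `ℓ`: starts at `δ`, stays in `D`, odd steps are `+e_i`,
even steps are `-e_i`. -/
def IsBWalk {k : ℕ} (D : Pt k → Prop) (ℓ : ℕ) (v : Fin (ℓ + 1) → Pt k) : Prop :=
  v ⟨0, Nat.succ_pos ℓ⟩ = delta k ∧ (∀ t, D (v t)) ∧
    ∀ t : ℕ, ∀ h : t + 1 < ℓ + 1,
      (Odd (t + 1) → plusStep (v ⟨t + 1, h⟩ - v ⟨t, by omega⟩)) ∧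
      (Even (t + 1) → minusStep (v ⟨t + 1, h⟩ - v ⟨t, by omega⟩))

/-- A walk is loop-free if no odd/even step pair `(+e_1, -e_1)` occurs. -/
def LoopFree {k ℓ : ℕ} (v : Fin (ℓ + 1) → Pt k) : Prop :=
  ∀ q : ℕ, 1 ≤ q → ∀ h : 2 * q < ℓ + 1,
    ¬ (v ⟨2 * q - 1, by omega⟩ - v ⟨2 * q - 2, by omega⟩ = eOne k ∧
       v ⟨2 * q, h⟩ - v ⟨2 * q - 1, by omega⟩ = -eOne k)

/-- `a^ν_{k,ℓ}`: the number of `𝒫_{Q_{k-1}}`-walks of length `ℓ` ending at `ν`. -/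
noncomputable def aCount (k ℓ : ℕ) (ν : Pt k) : ℕ :=
  Nat.card {v : Fin (ℓ + 1) → Pt k //
    IsPWalk (inQ (k := k)) ℓ v ∧ v (Fin.last ℓ) = ν}

/-- `ω^ν_{k,ℓ}`: the number of `𝒫_{W_{k-1}}`-walks of length `ℓ` ending at `ν`. -/
noncomputable def omegaCount (k ℓ : ℕ) (ν : Pt k) : ℕ :=
  Nat.card {v : Fin (ℓ + 1) → Pt k //
    IsPWalk (inW (k := k)) ℓ v ∧ v (Fin.last ℓ) = ν}

/-- `σ^ν_{k,ℓ}`: the number of `ℬ_{W_{k-1}}`-walks of length `ℓ` ending at `ν`. -/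
noncomputable def sigmaCount (k ℓ : ℕ) (ν : Pt k) : ℕ :=
  Nat.card {v : Fin (ℓ + 1) → Pt k //
    IsBWalk (inW (k := k)) ℓ v ∧ v (Fin.last ℓ) = ν}

/-- `σ^{ν;*}_{k,ℓ}`: the number of loop-free `ℬ_{W_{k-1}}`-walks of length `ℓ`
ending at `ν`. -/
noncomputable def sigmaStarCount (k ℓ : ℕ) (ν : Pt k) : ℕ :=
  Nat.card {v : Fin (ℓ + 1) → Pt k //
    IsBWalk (inW (k := k)) ℓ v ∧ LoopFree v ∧ v (Fin.last ℓ) = ν}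


section Walks
variable {k : ℕ}

/-- B-walk property from a general starting point, with loop-free flag. -/
def WProp (lf : Bool) (u ν : Pt k) (m : ℕ) (v : Fin (2*m+1) → Pt k) : Prop :=
  v ⟨0, by omega⟩ = u ∧ (∀ t, inW (v t)) ∧
    (∀ t : ℕ, ∀ h : t + 1 < 2*m + 1,
      (Odd (t + 1) → plusStep (v ⟨t + 1, h⟩ - v ⟨t, by omega⟩)) ∧
      (Even (t + 1) → minusStep (v ⟨t + 1, h⟩ - v ⟨t, by omega⟩))) ∧
    (lf = true → LoopFree v) ∧ v (Fin.last (2*m)) = ν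

def WT (lf : Bool) (u ν : Pt k) (m : ℕ) : Type :=
  {v : Fin (2*m+1) → Pt k // WProp lf u ν m v}

def consW (u : Pt k) (p : Fin k × Fin k) (m : ℕ) (w : Fin (2*m+1) → Pt k) :
    Fin (2*(m+1)+1) → Pt k :=
  fun t => if t.val = 0 then u else if t.val = 1 then u + eVec k p.1
    else w ⟨t.val - 2, by have := t.isLt; omega⟩

lemma consW_zero (u : Pt k) (p) (m) (w) (h : (0:ℕ) < 2*(m+1)+1) :
    consW u p m w ⟨0, h⟩ = u := rfl

lemma consW_one (u : Pt k) (p) (m) (w) (h : (1:ℕ) < 2*(m+1)+1) :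
    consW u p m w ⟨1, h⟩ = u + eVec k p.1 := rfl

lemma consW_ge (u : Pt k) (p) (m) (w) (t : ℕ) (h2 : 2 ≤ t) (h : t < 2*(m+1)+1) :
    consW u p m w ⟨t, h⟩ = w ⟨t - 2, by omega⟩ := by
  simp only [consW]
  rw [if_neg (by omega), if_neg (by omega)]
end Walks
section WalkProps
variable {k : ℕ}

lemma consW_ge' (u : Pt k) (p : Fin k × Fin k) (m : ℕ) (w : Fin (2*m+1) → Pt k)
    (t s : ℕ) (h : t < 2*(m+1)+1) (hs : s < 2*m+1) (hts : t = s + 2) :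
    consW u p m w ⟨t, h⟩ = w ⟨s, hs⟩ := by
  subst hts
  simp only [consW]
  rw [if_neg (by omega), if_neg (by omega)]
  exact congrArg w (Fin.ext (by simp))

lemma consW_prop {lf : Bool} {u ν : Pt k} {m : ℕ} {p : Fin k × Fin k}
    (hu : inW u) (hp : stepOK u p) (hlp : lf = true → ¬ isLoop k p)
    {w : Fin (2*m+1) → Pt k} (hw : WProp lf (nxt u p) ν m w) :
    WProp lf u ν (m+1) (consW u p m w) := by
  obtain ⟨hw0, hwin, hwstep, hwlf, hwend⟩ := hw
  refine ⟨rfl, ?_, ?_, ?_, ?_⟩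
  · rintro ⟨tv, ht⟩
    match tv, ht with
    | 0, ht => exact hu
    | 1, ht => exact hp.1
    | (s+2), ht =>
      rw [consW_ge' u p m w (s+2) s ht (by omega) rfl]
      exact hwin _
  · intro t h
    match t, h with
    | 0, h =>
      refine ⟨fun _ => ⟨p.1, ?_⟩, fun hev => ?_⟩
      · show u + eVec k p.1 - u = eVec k p.1
        ring
      · exfalso; rw [Nat.even_iff] at hev; omega
    | 1, h =>
      refine ⟨fun hodd => ?_, fun _ => ⟨p.2, ?_⟩⟩
      · exfalso; rw [Nat.odd_iff] at hodd; omega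
      · show consW u p m w ⟨1+1, h⟩ - (u + eVec k p.1) = -eVec k p.2
        rw [consW_ge' u p m w (1+1) 0 h (by omega) rfl, hw0]
        show u + eVec k p.1 - eVec k p.2 - (u + eVec k p.1) = -eVec k p.2
        ring
    | (s+2), h =>
      have hb : s + 1 < 2*m + 1 := by omega
      have hstep := hwstep s hb
      have e1 : consW u p m w ⟨s+2+1, h⟩ = w ⟨s+1, hb⟩ :=
        consW_ge' u p m w (s+2+1) (s+1) h hb (by omega)
      have e0 : consW u p m w ⟨s+2, by omega⟩ = w ⟨s, by omega⟩ :=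
        consW_ge' u p m w (s+2) s (by omega) (by omega) rfl
      constructor
      · intro hodd
        have hodd' : Odd (s+1) := by rw [Nat.odd_iff] at *; omega
        rw [e1, e0]
        exact hstep.1 hodd'
      · intro hev
        have hev' : Even (s+1) := by rw [Nat.even_iff] at *; omega
        rw [e1, e0]
        exact hstep.2 hev'
  · intro hlf q hq hq2
    rintro ⟨hA, hB⟩
    rcases q with _ | _ | r
    · omega
    · -- q = 1
      apply hlp hlf
      constructor
      · have hA' : u + eVec k p.1 - u = eOne k := hA
        calc eVec k p.1 = u + eVec k p.1 - u := by ring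
          _ = eOne k := hA'
      · have hB' : nxt u p - (u + eVec k p.1) = -eOne k := by
          rw [← hw0]; exact hB
        have : -eVec k p.2 = -eOne k := by
          calc -eVec k p.2 = nxt u p - (u + eVec k p.1) := by simp [nxt]
            _ = -eOne k := hB'
        exact neg_injective this
    · -- q = r + 2
      have hb2 : 2*(r+1) < 2*m + 1 := by omega
      apply hwlf hlf (r+1) (by omega) hb2
      constructor
      · have eA : consW u p m w ⟨2*(r+2)-1, by omega⟩ = w ⟨2*(r+1)-1, by omega⟩ :=
          consW_ge' u p m w _ _ (by omega) (by omega) (by omega)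
        have eB : consW u p m w ⟨2*(r+2)-2, by omega⟩ = w ⟨2*(r+1)-2, by omega⟩ :=
          consW_ge' u p m w _ _ (by omega) (by omega) (by omega)
        rw [eA, eB] at hA
        exact hA
      · have eA : consW u p m w ⟨2*(r+2), by omega⟩ = w ⟨2*(r+1), by omega⟩ :=
          consW_ge' u p m w _ _ (by omega) (by omega) (by omega)
        have eB : consW u p m w ⟨2*(r+2)-1, by omega⟩ = w ⟨2*(r+1)-1, by omega⟩ :=
          consW_ge' u p m w _ _ (by omega) (by omega) (by omega)
        rw [eA, eB] at hB
        exact hB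
  · show consW u p m w ⟨2*(m+1), by omega⟩ = ν
    rw [consW_ge' u p m w (2*(m+1)) (2*m) (by omega) (by omega) (by omega)]
    exact hwend
end WalkProps
section Bij
variable {k : ℕ}

lemma vext {n : ℕ} {α : Sort*} (v : Fin n → α) {a b : ℕ} {ha : a < n} (hab : a = b) :
    v ⟨a, ha⟩ = v ⟨b, hab ▸ ha⟩ := by subst hab; rfl

lemma cons_bijective {lf : Bool} {u ν : Pt k} {m : ℕ} (hu : inW u) :
    Function.Bijective
      (fun x : (Σ p : {p : Fin k × Fin k // p ∈ sel lf u}, WT lf (nxt u p.1) ν m) =>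
        (⟨consW u x.1.1 m x.2.1,
          consW_prop hu (mem_sel.mp x.1.2).1 (mem_sel.mp x.1.2).2 x.2.2⟩ :
          WT lf u ν (m+1))) := by
  constructor
  · rintro ⟨⟨p, hp⟩, ⟨w, hw⟩⟩ ⟨⟨p', hp'⟩, ⟨w', hw'⟩⟩ hab
    simp only [Subtype.mk.injEq] at hab
    have h1 : p.1 = p'.1 := by
      have := congrFun hab ⟨1, by omega⟩
      rw [consW_one, consW_one] at this
      exact eVec_inj (add_left_cancel this)
    have hn : nxt u p = nxt u p' := by
      have := congrFun hab ⟨2, by omega⟩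
      rw [consW_ge' u p m w 2 0 (by omega) (by omega) rfl,
        consW_ge' u p' m w' 2 0 (by omega) (by omega) rfl] at this
      rw [← hw.1, ← hw'.1]
      exact this
    have h2 : p.2 = p'.2 := by
      rw [nxt, nxt, h1] at hn
      exact eVec_inj (sub_right_injective hn)
    have hpp : p = p' := Prod.ext h1 h2
    subst hpp
    have hww : w = w' := by
      funext s
      rcases s with ⟨sv, hs⟩
      have := congrFun hab ⟨sv + 2, by omega⟩
      rw [consW_ge' u p m w (sv+2) sv (by omega) hs rfl,
        consW_ge' u p m w' (sv+2) sv (by omega) hs rfl] at this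
      exact this
    subst hww
    rfl
  · rintro ⟨v, hv⟩
    obtain ⟨h0, hin, hstep, hlfv, hend⟩ := hv
    obtain ⟨i, hi⟩ := (hstep 0 (by omega)).1 odd_one
    obtain ⟨j, hj⟩ := (hstep 1 (by omega)).2 ⟨1, rfl⟩
    have hv1 : v ⟨1, by omega⟩ = u + eVec k i := by
      have h := eq_add_of_sub_eq hi
      rw [h0] at h
      exact h.trans (add_comm _ _)
    have hv2 : v ⟨2, by omega⟩ = nxt u (i, j) := by
      have h := eq_add_of_sub_eq hj
      rw [hv1] at h
      exact h.trans (by rw [nxt]; ring)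
    have hpOK : stepOK u (i, j) := by
      refine ⟨?_, ?_⟩
      · rw [← hv1]; exact hin _
      · rw [← hv2]; exact hin _
    have hpsel : (i, j) ∈ sel lf u := by
      rw [mem_sel]
      refine ⟨hpOK, fun hlf hloop => ?_⟩
      exact (hlfv hlf 1 le_rfl (by omega))
        ⟨hi.trans hloop.1, hj.trans (congrArg Neg.neg hloop.2)⟩
    refine ⟨⟨⟨(i, j), hpsel⟩,
      ⟨fun s => v ⟨s.val + 2, by have := s.isLt; omega⟩, ?_, ?_, ?_, ?_, ?_⟩⟩, ?_⟩
    · exact hv2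
    · intro t; exact hin _
    · intro s hs
      have hstep' := hstep (s + 2) (by omega)
      constructor
      · intro hodd
        have hodd' : Odd (s + 2 + 1) := by rw [Nat.odd_iff] at *; omega
        exact hstep'.1 hodd'
      · intro hev
        have hev' : Even (s + 2 + 1) := by rw [Nat.even_iff] at *; omega
        exact hstep'.2 hev'
    · intro hlf q hq hq2
      have key := hlfv hlf (q + 1) (by omega) (by omega)
      rintro ⟨hA, hB⟩
      apply key
      constructor
      · rw [vext v (show 2*(q+1)-1 = (2*q-1)+2 by omega),
          vext v (show 2*(q+1)-2 = (2*q-2)+2 by omega)]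
        exact hA
      · rw [vext v (show 2*(q+1) = (2*q)+2 by omega),
          vext v (show 2*(q+1)-1 = (2*q-1)+2 by omega)]
        exact hB
    · exact hend
    · apply Subtype.ext
      funext t
      rcases t with ⟨tv, ht⟩
      match tv, ht with
      | 0, ht => exact h0.symm
      | 1, ht => exact hv1.symm
      | (s+2), ht =>
        exact consW_ge' u (i,j) m
          (fun s => v ⟨s.val + 2, by have := s.isLt; omega⟩) (s+2) s ht (by omega) rfl

lemma WT_subsingleton_zero (lf : Bool) (u ν : Pt k) : Subsingleton (WT lf u ν 0) := by
  constructor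
  rintro ⟨v, hv⟩ ⟨v', hv'⟩
  apply Subtype.ext
  funext t
  have ht : t = ⟨0, by omega⟩ := Fin.ext (by have := t.isLt; omega)
  rw [ht]
  exact hv.1.trans hv'.1.symm

lemma WT_empty {lf : Bool} {u ν : Pt k} {m : ℕ} (hu : ¬ inW u) : IsEmpty (WT lf u ν m) :=
  ⟨fun x => hu (by rw [← x.2.1]; exact x.2.2.1 _)⟩

lemma WT_finite (lf : Bool) (ν : Pt k) : ∀ m (u : Pt k), Finite (WT lf u ν m) := by
  intro m
  induction m with
  | zero => intro u; exact @Finite.of_subsingleton _ (WT_subsingleton_zero lf u ν)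
  | succ m ih =>
    intro u
    by_cases hu : inW u
    · haveI : ∀ p : {p : Fin k × Fin k // p ∈ sel lf u}, Finite (WT lf (nxt u p.1) ν m) :=
        fun p => ih _
      exact Finite.of_surjective _ (cons_bijective hu).2
    · exact @Finite.of_subsingleton _ (@IsEmpty.instSubsingleton _ (WT_empty hu))

lemma card_WT (lf : Bool) (ν : Pt k) : ∀ m (u : Pt k), inW u →
    Nat.card (WT lf u ν m) = cnt ν lf m u := by
  intro m
  induction m with
  | zero =>
    intro u hu
    classical
    rcases eq_or_ne u ν with rfl | hne
    · rw [cnt_zero, if_pos rfl]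
      haveI := WT_subsingleton_zero lf u u
      haveI : Nonempty (WT lf u u 0) :=
        ⟨⟨fun _ => u, rfl, fun _ => hu, fun t h => absurd h (by omega),
          fun _ q hq h2 => absurd h2 (by omega), rfl⟩⟩
      exact Nat.card_unique
    · rw [cnt_zero, if_neg hne]
      haveI : IsEmpty (WT lf u ν 0) := ⟨fun x => hne (by rw [← x.2.1]; exact x.2.2.2.2.2)⟩
      exact Nat.card_of_isEmpty
  | succ m ih =>
    intro u hu
    classical
    haveI : ∀ p : {p : Fin k × Fin k // p ∈ sel lf u}, Fintype (WT lf (nxt u p.1) ν m) :=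
      fun p => @Fintype.ofFinite _ (WT_finite lf ν m _)
    calc Nat.card (WT lf u ν (m+1))
        = Nat.card (Σ p : {p : Fin k × Fin k // p ∈ sel lf u}, WT lf (nxt u p.1) ν m) :=
          (Nat.card_eq_of_bijective _ (cons_bijective hu)).symm
      _ = Fintype.card (Σ p : {p : Fin k × Fin k // p ∈ sel lf u}, WT lf (nxt u p.1) ν m) :=
          Nat.card_eq_fintype_card
      _ = ∑ p : {p : Fin k × Fin k // p ∈ sel lf u}, Fintype.card (WT lf (nxt u p.1) ν m) :=
          Fintype.card_sigma
      _ = ∑ p : {p : Fin k × Fin k // p ∈ sel lf u}, cnt ν lf m (nxt u p.1) := by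
          refine Finset.sum_congr rfl fun p _ => ?_
          rw [← Nat.card_eq_fintype_card]
          exact ih (nxt u p.1) (mem_sel.mp p.2).1.2
      _ = ∑ p ∈ sel lf u, cnt ν lf m (nxt u p) := by
          exact Finset.sum_coe_sort (sel lf u) (fun p => cnt ν lf m (nxt u p))
      _ = cnt ν lf (m+1) u := (cnt_succ ν lf m u).symm
end Bij
section Connect
variable {k : ℕ}

lemma sigmaStar_eq (ℓ : ℕ) (ν : Pt k) :
    sigmaStarCount k (2*ℓ) ν = Nat.card (WT true (delta k) ν ℓ) := by
  apply Nat.card_congr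
  apply Equiv.subtypeEquivRight
  intro v
  constructor
  · rintro ⟨⟨h0, hin, hstep⟩, hlf, hend⟩
    exact ⟨h0, hin, hstep, fun _ => hlf, hend⟩
  · rintro ⟨h0, hin, hstep, hlf, hend⟩
    exact ⟨⟨h0, hin, hstep⟩, hlf rfl, hend⟩

def preD (k : ℕ) (m : ℕ) (w : Fin (2*m+1) → Pt k) : Fin (2*m+1+1) → Pt k :=
  fun t => if t.val = 0 then delta k else w ⟨t.val - 1, by have := t.isLt; omega⟩

lemma delta_sub (hk : 2 ≤ k) {i : Fin k} (h : inW (delta k - eVec k i)) :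
    eVec k i = 0 := by
  rcases Nat.eq_zero_or_pos (i : ℕ) with h0 | h0
  · exact eVec_eq_zero h0
  exfalso
  obtain ⟨s, hs⟩ := Nat.exists_eq_add_of_lt h0
  have hs0 : (i : ℕ) = s + 1 := by omega
  have hs1 : s < k - 1 := by have := i.isLt; omega
  have hval : (delta k - eVec k i) ⟨s, hs1⟩ = (k:ℤ) - 2 - (s:ℤ) - 1 := by
    simp only [Pi.sub_apply, delta, eVec]
    simp only [Fin.val_mk, hs0, if_pos rfl]
    push_cast
    ring
  by_cases hcase : s + 1 < k - 1
  · have hval2 : (delta k - eVec k i) ⟨s+1, hcase⟩ = (k:ℤ) - 2 - ((s:ℤ)+1) := by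
      simp only [Pi.sub_apply, delta, eVec]
      rw [if_neg (by simp only [Fin.val_mk, hs0]; omega)]
      push_cast
      ring
    have hlt : (⟨s, hs1⟩ : Fin (k-1)) < ⟨s+1, hcase⟩ := Nat.lt_succ_self s
    have := h.1 hlt
    rw [hval, hval2] at this
    omega
  · have hge : 0 ≤ (delta k - eVec k i) ⟨s, hs1⟩ := h.2 _
    rw [hval] at hge
    omega

lemma preD_prop (hk : 3 ≤ k) {ν : Pt k} {m : ℕ} {w : Fin (2*m+1) → Pt k}
    (hw : WProp false (delta k) ν m w) :
    IsPWalk (inW (k := k)) (2*m+1) (preD k m w) ∧ preD k m w (Fin.last (2*m+1)) = ν := by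
  obtain ⟨hw0, hwin, hwstep, -, hwend⟩ := hw
  refine ⟨⟨rfl, ?_, ?_⟩, ?_⟩
  · rintro ⟨tv, ht⟩
    match tv, ht with
    | 0, ht => exact inW_delta (by omega)
    | (s+1), ht => exact hwin _
  · intro t h
    match t, h with
    | 0, h =>
      refine ⟨fun _ => ⟨⟨0, by omega⟩, ?_⟩, fun hev => ?_⟩
      · show w ⟨0, by omega⟩ - delta k = -eVec k ⟨0, by omega⟩
        rw [hw0, eVec_eq_zero rfl]
        simp
      · exfalso; rw [Nat.even_iff] at hev; omega
    | (s+1), h =>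
      have hs : s + 1 < 2*m + 1 := by omega
      have hstep := hwstep s hs
      constructor
      · intro hodd
        have hev' : Even (s+1) := by rw [Nat.odd_iff] at hodd; rw [Nat.even_iff]; omega
        exact hstep.2 hev'
      · intro hev
        have hodd' : Odd (s+1) := by rw [Nat.even_iff] at hev; rw [Nat.odd_iff]; omega
        exact hstep.1 hodd'
  · exact hwend

lemma omega_eq (hk : 3 ≤ k) (ν : Pt k) (m : ℕ) :
    omegaCount k (2*m+1) ν = Nat.card (WT false (delta k) ν m) := by
  refine (Nat.card_eq_of_bijective
    (fun w : WT false (delta k) ν m => ⟨preD k m w.1, preD_prop hk w.2⟩) ⟨?_, ?_⟩).symm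
  · rintro ⟨w, hw⟩ ⟨w', hw'⟩ hab
    simp only [Subtype.mk.injEq] at hab
    apply Subtype.ext
    funext s
    rcases s with ⟨sv, hs⟩
    exact congrFun hab ⟨sv + 1, by omega⟩
  · rintro ⟨v, ⟨h0, hin, hstep⟩, hend⟩
    obtain ⟨i, hi⟩ := (hstep 0 (by omega)).1 odd_one
    have h1 : v ⟨1, by omega⟩ = delta k := by
      have hd : v ⟨1, by omega⟩ = delta k - eVec k i := by
        have h := eq_add_of_sub_eq hi
        rw [h0] at h
        exact h.trans (by ring)
      have hz : eVec k i = 0 := delta_sub (by omega) (by rw [← hd]; exact hin _)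
      rw [hd, hz]
      simp
    refine ⟨⟨fun s => v ⟨s.val + 1, by have := s.isLt; omega⟩, ?_, ?_, ?_, ?_, ?_⟩, ?_⟩
    · exact h1
    · intro t; exact hin _
    · intro s hs
      have hstep' := hstep (s+1) (by omega)
      constructor
      · intro hodd
        have hev' : Even (s+1+1) := by rw [Nat.odd_iff] at hodd; rw [Nat.even_iff]; omega
        exact hstep'.2 hev'
      · intro hev
        have hodd' : Odd (s+1+1) := by rw [Nat.even_iff] at hev; rw [Nat.odd_iff]; omega
        exact hstep'.1 hodd'
    · exact fun h => Bool.noConfusion h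
    · exact hend
    · apply Subtype.ext
      funext t
      rcases t with ⟨tv, ht⟩
      match tv, ht with
      | 0, ht => exact h0.symm
      | (s+1), ht => rfl
end Connect
/-- `(a,b)` is an arc of the standard representation of the partition `P`:
`a < b`, `a` and `b` lie in a common block `B`, and no element of `B` lies
strictly between them. -/
def IsArc {N : ℕ} (P : Finpartition (Finset.univ : Finset (Fin N))) (a b : Fin N) : Prop :=
  a < b ∧ ∃ B ∈ P.parts, a ∈ B ∧ b ∈ B ∧ ∀ c ∈ B, ¬(a < c ∧ c < b)

/-- The partition `P` has a `k`-crossing: arcs `(i₁,j₁),…,(i_k,j_k)` with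
`i₁ < ⋯ < i_k < j₁ < ⋯ < j_k`. -/
def PartitionHasKCrossing {N : ℕ} (k : ℕ)
    (P : Finpartition (Finset.univ : Finset (Fin N))) : Prop :=
  ∃ ii jj : Fin k → Fin N, (∀ m, IsArc P (ii m) (jj m)) ∧
    StrictMono ii ∧ StrictMono jj ∧ ∀ m m', ii m < jj m'

/-- The partition `P` is `2`-regular: distinct elements of a common block differ
by at least `2`. -/
def TwoRegular {N : ℕ} (P : Finpartition (Finset.univ : Finset (Fin N))) : Prop :=
  ∀ B ∈ P.parts, ∀ x ∈ B, ∀ y ∈ B, x ≠ y → 2 ≤ |((x : ℕ) : ℤ) - ((y : ℕ) : ℤ)|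

/-- A braid over `[N]`, given by its arc set: arcs `(i,j)` with `i ≤ j` (loops
allowed), each vertex is the smaller endpoint of at most one arc and the larger
endpoint of at most one arc. -/
def IsBraid {N : ℕ} (A : Finset (Fin N × Fin N)) : Prop :=
  (∀ p ∈ A, p.1 ≤ p.2) ∧ (∀ p ∈ A, ∀ q ∈ A, p.1 = q.1 → p = q) ∧
    (∀ p ∈ A, ∀ q ∈ A, p.2 = q.2 → p = q)

/-- The braid with arc set `A` has a `k`-crossing: arcs `(i₁,j₁),…,(i_k,j_k)`
with `i₁ < ⋯ < i_k ≤ j₁ < ⋯ < j_k`. -/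
def BraidHasKCrossing {N : ℕ} (k : ℕ) (A : Finset (Fin N × Fin N)) : Prop :=
  ∃ ii jj : Fin k → Fin N, (∀ m, (ii m, jj m) ∈ A) ∧
    StrictMono ii ∧ StrictMono jj ∧ ∀ m m', ii m ≤ jj m'

/-- A braid is loop-free if it has no arc `(i,i)`. -/
def BraidLoopFree {N : ℕ} (A : Finset (Fin N × Fin N)) : Prop :=
  ∀ p ∈ A, p.1 ≠ p.2

/-- `σ^{ν;*}_{k,2ℓ} = Σ_{h=0}^{ℓ} (-1)^h C(ℓ,h) ω^ν_{k,2(ℓ-h)+1}`. -/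
theorem sigmaStar_even_formula (k ℓ : ℕ) (hk : 3 ≤ k) (ν : Pt k) (hν : inW ν) :
    (sigmaStarCount k (2 * ℓ) ν : ℤ) =
      ∑ h ∈ Finset.range (ℓ + 1),
        (-1) ^ h * (ℓ.choose h : ℤ) * (omegaCount k (2 * (ℓ - h) + 1) ν : ℤ) := by
  have h2 : 2 ≤ k := by omega
  have hδ : inW (delta k) := inW_delta h2
  rw [sigmaStar_eq, card_WT true ν ℓ (delta k) hδ, cnt_inversion h2 ν ℓ (delta k) hδ]
  refine Finset.sum_congr rfl fun h hh => ?_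
  congr 1
  rw [omega_eq hk ν (ℓ - h), card_WT false ν (ℓ - h) (delta k) hδ]
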